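/- Let n be a positive integer and f : ZMod n → ℤ taking values in {-1,0,1} such that the nonzero values alternate in sign around the cycle (i.e., for any a < b with f(a) ≠ 0 ≠ f(b) and f(c) = 0 for all c strictly between a and b cyclically, f(a) = -f(b)). Then the number of a with f(a) = 1 equals the number of a with f(a) = -1. -/

import Mathlib

theorem alternation_equal_plus_minus (n : ℕ) [NeZero n] (f : ZMod n → ℤ)
    (hvals : ∀ a : ZMod n, f a ∈ ({-1, 0, 1} : Set ℤ))
    (halt : ∀ (a : ZMod n) (t : ℕ), 0 < t → f a ≠ 0 → f (a + (t : ZMod n)) ≠ 0 →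
      (∀ j : ℕ, 0 < j → j < t → f (a + (j : ZMod n)) = 0) →
      f a = -f (a + (t : ZMod n))) :
    (Finset.univ.filter (fun a : ZMod n => f a = 1)).card =
      (Finset.univ.filter (fun a : ZMod n => f a = -1)).card := by
  classical
  have hn : 0 < n := Nat.pos_of_ne_zero (NeZero.ne n)
  have hex : ∀ a : ZMod n, f a ≠ 0 → ∃ t : ℕ, 0 < t ∧ f (a + (t : ZMod n)) ≠ 0 := by
    intro a ha
    exact ⟨n, hn, by simpa [ZMod.natCast_self] using ha⟩
  let T : ∀ a : ZMod n, f a ≠ 0 → ℕ := fun a ha => Nat.find (hex a ha)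
  have hTpos : ∀ a ha, 0 < T a ha := fun a ha => (Nat.find_spec (hex a ha)).1
  have hTne : ∀ a ha, f (a + (T a ha : ZMod n)) ≠ 0 := fun a ha => (Nat.find_spec (hex a ha)).2
  have hTmin : ∀ a ha, ∀ j : ℕ, 0 < j → j < T a ha → f (a + (j : ZMod n)) = 0 := by
    intro a ha j hj hjt
    by_contra h
    exact Nat.find_min (hex a ha) hjt ⟨hj, h⟩
  have hsign : ∀ a ha, f a = -f (a + (T a ha : ZMod n)) := fun a ha =>
    halt a (T a ha) (hTpos a ha) ha (hTne a ha) (hTmin a ha)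
  have key : ∀ a b (ha : f a ≠ 0) (hb : f b ≠ 0),
      T b hb < T a ha → a + (T a ha : ZMod n) = b + (T b hb : ZMod n) → False := by
    intro a b ha hb hlt heq
    have hc : ((T a ha - T b hb : ℕ) : ZMod n) =
        (T a ha : ZMod n) - (T b hb : ZMod n) := Nat.cast_sub hlt.le
    have hb' : b = a + ((T a ha - T b hb : ℕ) : ZMod n) := by
      rw [hc, ← add_sub_assoc, heq, add_sub_cancel_right]
    have : f b = 0 := by
      rw [hb']
      exact hTmin a ha _ (Nat.sub_pos_of_lt hlt) (Nat.sub_lt (hTpos a ha) (hTpos b hb))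
    exact hb this
  have hinj : ∀ a b (ha : f a ≠ 0) (hb : f b ≠ 0),
      a + (T a ha : ZMod n) = b + (T b hb : ZMod n) → a = b := by
    intro a b ha hb heq
    rcases lt_trichotomy (T a ha) (T b hb) with h | h | h
    · exact absurd (key b a hb ha h heq.symm) not_false
    · have : (T a ha : ZMod n) = (T b hb : ZMod n) := by rw [h]
      rw [this] at heq
      exact add_right_cancel heq
    · exact absurd (key a b ha hb h heq) not_false
  let g : ZMod n → ZMod n := fun a => if h : f a ≠ 0 then a + (T a h : ZMod n) else a
  have hg : ∀ a (h : f a ≠ 0), g a = a + (T a h : ZMod n) := fun a h => dif_pos h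
  have step : ∀ (u v : ℤ), u = -v →
      (Finset.univ.filter (fun a : ZMod n => f a = u)).card ≤
        (Finset.univ.filter (fun a : ZMod n => f a = v)).card → True := fun _ _ _ _ => trivial
  have main : ∀ u v : ℤ, u ≠ 0 → v = -u →
      (Finset.univ.filter (fun a : ZMod n => f a = u)).card ≤
        (Finset.univ.filter (fun a : ZMod n => f a = v)).card := by
    intro u v hu hv
    apply Finset.card_le_card_of_injOn g
    · intro a haf
      simp only [Finset.mem_coe, Finset.mem_filter, Finset.mem_univ, true_and] at haf ⊢
      have ha : f a ≠ 0 := by rw [haf]; exact hu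
      rw [hg a ha, ← neg_eq_iff_eq_neg.mpr (hsign a ha), haf, hv]
    · intro a haf b hbf hab
      simp only [Finset.coe_filter, Set.mem_setOf_eq, Finset.mem_univ, true_and] at haf hbf
      have ha : f a ≠ 0 := by rw [haf]; exact hu
      have hb : f b ≠ 0 := by rw [hbf]; exact hu
      rw [hg a ha, hg b hb] at hab
      exact hinj a b ha hb hab
  exact le_antisymm (main 1 (-1) one_ne_zero rfl)
    (main (-1) 1 (by norm_num) (by norm_num))
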